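/- arXiv:2507.01847 — 3 statements merged into one kernel-verified Lean document; each statement's English description precedes it below -/
import Mathlib

section
/- Let A be a densely defined closed C-symmetric operator and B = CAC. In the graph-norm Hilbert space H_{B*} (domain of B* with inner product ⟨f,g⟩ + ⟨B*f, B*g⟩), the orthogonal complement of D(A) equals the kernel N(I + A*B*) = N(I + A*CA*C). -/
open scoped InnerProductSpace
open LinearPMap

variable {H : Type*} [NormedAddCommGroup H] [InnerProductSpace ℂ H]

/-- A conjugation on a complex inner product space: a conjugate-linear involution
satisfying `⟪Cx, Cy⟫ = ⟪y, x⟫`. -/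
structure Conjugation (H : Type*) [NormedAddCommGroup H] [InnerProductSpace ℂ H] where
  toFun : H → H
  map_add' : ∀ x y, toFun (x + y) = toFun x + toFun y
  map_smulc : ∀ (c : ℂ) (x : H), toFun (c • x) = (starRingEnd ℂ c) • toFun x
  invol : ∀ x, toFun (toFun x) = x
  inner_conj : ∀ x y, ⟪toFun x, toFun y⟫_ℂ = ⟪y, x⟫_ℂ

namespace Conjugation

instance : CoeFun (Conjugation H) fun _ => H → H := ⟨toFun⟩

lemma map_zero (C : Conjugation H) : C 0 = 0 := by
  have := C.map_smulc 0 0; simpa using this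

lemma mem_of_mem_image (C : Conjugation H) {S : Set H} {x : H} (hx : x ∈ C.toFun '' S) :
    C x ∈ S := by
  obtain ⟨t, ht, rfl⟩ := hx
  rwa [C.invol]

/-- The image `C(D)` of a subspace under a conjugation, as a subspace. -/
def conjDomain (C : Conjugation H) (D : Submodule ℂ H) : Submodule ℂ H where
  carrier := C.toFun '' (D : Set H)
  add_mem' := by
    rintro a b ⟨x, hx, rfl⟩ ⟨y, hy, rfl⟩
    exact ⟨x + y, D.add_mem hx hy, (C.map_add' x y).symm ▸ rfl⟩
  zero_mem' := ⟨0, D.zero_mem, C.map_zero⟩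
  smul_mem' := by
    rintro c a ⟨x, hx, rfl⟩
    refine ⟨(starRingEnd ℂ c) • x, D.smul_mem _ hx, ?_⟩
    rw [C.map_smulc]; simp

lemma conj_mem (C : Conjugation H) {D : Submodule ℂ H} {x : H} (hx : x ∈ C.conjDomain D) :
    C x ∈ D := C.mem_of_mem_image hx

/-- The operator `C T C` with domain `C(D(T))`. -/
noncomputable def conjOp (C : Conjugation H) (T : H →ₗ.[ℂ] H) : H →ₗ.[ℂ] H where
  domain := C.conjDomain T.domain
  toFun :=
  { toFun := fun x => C (T ⟨C ↑x, C.conj_mem x.2⟩)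
    map_add' := by
      intro x y
      have h : (⟨C ↑(x + y), C.conj_mem (x + y).2⟩ : T.domain)
          = ⟨C ↑x, C.conj_mem x.2⟩ + ⟨C ↑y, C.conj_mem y.2⟩ := by
        apply Subtype.ext; simp [C.map_add']
      try dsimp only
      rw [h, T.map_add, C.map_add']
    map_smul' := by
      intro c x
      have h : (⟨C ↑(c • x), C.conj_mem (c • x).2⟩ : T.domain)
          = (starRingEnd ℂ c) • (⟨C ↑x, C.conj_mem x.2⟩ : T.domain) := by
        apply Subtype.ext; simp [C.map_smulc]
      try dsimp only
      rw [h, T.map_smul, C.map_smulc]; simp }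

/-- `A` is `C`-symmetric: `CAC ⊆ A*`. -/
noncomputable def IsCSymmetric [CompleteSpace H] (C : Conjugation H) (A : H →ₗ.[ℂ] H) : Prop :=
  C.conjOp A ≤ A†

/-- `A` is `C`-self-adjoint: `CAC = A*`. -/
noncomputable def IsCSelfAdjoint [CompleteSpace H] (C : Conjugation H) (A : H →ₗ.[ℂ] H) : Prop :=
  C.conjOp A = A†

end Conjugation
variable [CompleteSpace H]

open scoped InnerProductSpace in
/-- The kernel `N(I + A*CA*C)`. -/
noncomputable def kerIplusAstarCAstarC (C : Conjugation H) (A : H →ₗ.[ℂ] H) : Set H :=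
  {g | ∃ hg : g ∈ (C.conjOp (A†)).domain, ∃ h2 : (C.conjOp (A†)) ⟨g, hg⟩ ∈ (A†).domain,
      g + A† ⟨(C.conjOp (A†)) ⟨g, hg⟩, h2⟩ = 0}

/-- The kernel `N(I + CA*CA*)`. -/
noncomputable def kerIplusCAstarCAstar (C : Conjugation H) (A : H →ₗ.[ℂ] H) : Set H :=
  {g | ∃ hg : g ∈ (A†).domain, ∃ h2 : A† ⟨g, hg⟩ ∈ (C.conjOp (A†)).domain,
      g + (C.conjOp (A†)) ⟨A† ⟨g, hg⟩, h2⟩ = 0}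

/-- The kernel `N(I + A*B*)` where `B = CAC`. -/
noncomputable def kerIplusAstarBstar (C : Conjugation H) (A : H →ₗ.[ℂ] H) : Set H :=
  {g | ∃ hg : g ∈ ((C.conjOp A)†).domain, ∃ h2 : (C.conjOp A)† ⟨g, hg⟩ ∈ (A†).domain,
      g + A† ⟨(C.conjOp A)† ⟨g, hg⟩, h2⟩ = 0}

open scoped InnerProductSpace in
/-- The orthogonal complement of `S` within `W`, with respect to the graph inner
product `⟪f, g⟫ + ⟪Tf, Tg⟫` of `T`. -/
def graphOrthComplIn (T : H →ₗ.[ℂ] H) (W S : Set H) : Set H :=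
  {g | g ∈ W ∧ ∃ hg : g ∈ T.domain, ∀ f ∈ S, ∀ hf : f ∈ T.domain,
      ⟪f, g⟫_ℂ + ⟪T ⟨f, hf⟩, T ⟨g, hg⟩⟫_ℂ = 0}

/-- The deficiency space `N(T* - μ)`. -/
noncomputable def defectSpace (T : H →ₗ.[ℂ] H) (μ : ℂ) : Submodule ℂ H where
  carrier := {z | ∃ hz : z ∈ (T†).domain, T† ⟨z, hz⟩ = μ • z}
  add_mem' := by
    rintro a b ⟨ha, hva⟩ ⟨hb, hvb⟩
    refine ⟨(T†).domain.add_mem ha hb, ?_⟩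
    have h : (⟨a + b, (T†).domain.add_mem ha hb⟩ : (T†).domain) = ⟨a, ha⟩ + ⟨b, hb⟩ := rfl
    rw [h, LinearPMap.map_add, hva, hvb, smul_add]
  zero_mem' := by
    refine ⟨(T†).domain.zero_mem, ?_⟩
    have h : (⟨(0 : H), (T†).domain.zero_mem⟩ : (T†).domain) = 0 := rfl
    rw [h, LinearPMap.map_zero, smul_zero]
  smul_mem' := by
    rintro c a ⟨ha, hva⟩
    refine ⟨(T†).domain.smul_mem c ha, ?_⟩
    have h : (⟨c • a, (T†).domain.smul_mem c ha⟩ : (T†).domain) = c • ⟨a, ha⟩ := rfl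
    rw [h, LinearPMap.map_smul, hva, smul_comm]



namespace Conjugation

variable (C : Conjugation H)

lemma map_neg' (x : H) : C (-x) = -C x := by
  have := C.map_smulc (-1) x; simpa using this

lemma map_sub' (x y : H) : C (x - y) = C x - C y := by
  rw [sub_eq_add_neg, sub_eq_add_neg, C.map_add', C.map_neg']

lemma inner_C_left (x y : H) : ⟪C x, y⟫_ℂ = ⟪C y, x⟫_ℂ := by
  conv_lhs => rw [← C.invol y]
  rw [C.inner_conj]

lemma inner_C_right (x y : H) : ⟪x, C y⟫_ℂ = ⟪y, C x⟫_ℂ := by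
  conv_lhs => rw [← C.invol x]
  rw [C.inner_conj]

lemma norm_map (x : H) : ‖C x‖ = ‖x‖ := by
  have h : ⟪C x, C x⟫_ℂ = ⟪x, x⟫_ℂ := C.inner_conj x x
  rw [norm_eq_sqrt_re_inner (𝕜 := ℂ), norm_eq_sqrt_re_inner (𝕜 := ℂ) x, h]

lemma dense_image {s : Set H} (hs : Dense s) : Dense (C.toFun '' s) := by
  rw [Metric.dense_iff] at hs ⊢
  intro x r hr
  obtain ⟨y, hy1, hy2⟩ := hs (C x) r hr
  refine ⟨C y, ?_, ⟨y, hy2, rfl⟩⟩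
  rw [Metric.mem_ball, dist_eq_norm] at hy1 ⊢
  calc ‖C y - x‖ = ‖C (y - C x)‖ := by rw [C.map_sub', C.invol]
    _ = ‖y - C x‖ := C.norm_map _
    _ < r := hy1

lemma mem_conjDomain_iff {D : Submodule ℂ H} {x : H} :
    x ∈ C.conjDomain D ↔ C x ∈ D := by
  constructor
  · exact fun h => C.conj_mem h
  · exact fun h => ⟨C x, h, C.invol x⟩

lemma conjOp_apply (T : H →ₗ.[ℂ] H) (x : (C.conjOp T).domain) :
    C.conjOp T x = C (T ⟨C ↑x, C.conj_mem x.2⟩) := rfl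

lemma apply_congr {T : H →ₗ.[ℂ] H} {x y : T.domain} (h : (x : H) = y) : T x = T y := by
  congr 1; exact Subtype.ext h

lemma conjOp_mono {S T : H →ₗ.[ℂ] H} (h : S ≤ T) : C.conjOp S ≤ C.conjOp T := by
  constructor
  · intro x hx
    exact C.mem_conjDomain_iff.mpr (h.1 (C.conj_mem hx))
  · intro x y hxy
    rw [C.conjOp_apply, C.conjOp_apply]
    congr 1
    exact h.2 (congrArg C.toFun hxy)

lemma conjOp_conjOp (T : H →ₗ.[ℂ] H) : C.conjOp (C.conjOp T) = T := by
  have hdom : (C.conjOp (C.conjOp T)).domain = T.domain := by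
    ext x
    constructor
    · intro hx
      have h1 := C.conj_mem (C.conj_mem hx)
      rwa [C.invol] at h1
    · intro hx
      refine C.mem_conjDomain_iff.mpr (C.mem_conjDomain_iff.mpr ?_)
      rwa [C.invol]
  refine LinearPMap.ext hdom ?_
  intro x hx' hy'
  rw [C.conjOp_apply, C.conjOp_apply, C.invol]
  refine apply_congr ?_
  show C.toFun (C.toFun x) = x
  rw [C.invol]

lemma dense_conjOp_domain {T : H →ₗ.[ℂ] H} (hT : Dense (T.domain : Set H)) :
    Dense ((C.conjOp T).domain : Set H) := C.dense_image hT

open LinearPMap in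
lemma conjOp_adjoint_le {T : H →ₗ.[ℂ] H} (hT : Dense (T.domain : Set H)) :
    C.conjOp (T†) ≤ (C.conjOp T)† := by
  refine LinearPMap.IsFormalAdjoint.le_adjoint (C.dense_conjOp_domain hT) ?_
  intro x y
  rw [C.conjOp_apply, C.conjOp_apply, C.inner_C_left, C.inner_C_right]
  exact (LinearPMap.adjoint_isFormalAdjoint hT ⟨C ↑y, C.conj_mem y.2⟩
    ⟨C ↑x, C.conj_mem x.2⟩).symm

open LinearPMap in
lemma conjOp_adjoint {T : H →ₗ.[ℂ] H} (hT : Dense (T.domain : Set H)) :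
    (C.conjOp T)† = C.conjOp (T†) := by
  refine le_antisymm ?_ (C.conjOp_adjoint_le hT)
  have h1 : C.conjOp ((C.conjOp T)†) ≤ T† := by
    have h2 := C.conjOp_adjoint_le (T := C.conjOp T) (C.dense_conjOp_domain hT)
    rwa [C.conjOp_conjOp] at h2
  have h3 := C.conjOp_mono h1
  rwa [C.conjOp_conjOp] at h3

end Conjugation

theorem stmt_4 (C : Conjugation H) (A : H →ₗ.[ℂ] H) (hA : Dense (A.domain : Set H))
    (hclosed : A.IsClosed) (hsym : C.IsCSymmetric A) :
    graphOrthComplIn ((C.conjOp A)†) (((C.conjOp A)†).domain : Set H) (A.domain : Set H)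
      = kerIplusAstarBstar C A
    ∧ graphOrthComplIn ((C.conjOp A)†) (((C.conjOp A)†).domain : Set H) (A.domain : Set H)
      = kerIplusAstarCAstarC C A := by
  classical
  have hEq : ((C.conjOp A)†) = C.conjOp (A†) := C.conjOp_adjoint hA
  have hAB : A ≤ ((C.conjOp A)†) := by
    rw [hEq]
    have h := C.conjOp_mono hsym
    rwa [C.conjOp_conjOp] at h
  have hmain : graphOrthComplIn ((C.conjOp A)†) (((C.conjOp A)†).domain : Set H)
      (A.domain : Set H) = kerIplusAstarBstar C A := by
    ext g
    constructor
    · rintro ⟨hgW, hg, hperp⟩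
      set w := (C.conjOp A)† ⟨g, hg⟩ with hw
      have hkey : ∀ x : A.domain, ⟪(A x : H), w⟫_ℂ = -⟪(x : H), g⟫_ℂ := by
        intro x
        have h1 := hperp x x.2 (hAB.1 x.2)
        have h2 : (C.conjOp A)† ⟨(x : H), hAB.1 x.2⟩ = A x := (hAB.2 rfl).symm
        rw [h2] at h1
        linear_combination h1
      have hkey2 : ∀ x : A.domain, ⟪-g, (x : H)⟫_ℂ = ⟪w, A x⟫_ℂ := by
        intro x
        rw [← inner_conj_symm w ((A x : H)), hkey x]
        simp [inner_neg_left, inner_conj_symm]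
      have h2 : w ∈ (A†).domain :=
        LinearPMap.mem_adjoint_domain_of_exists w ⟨-g, hkey2⟩
      refine ⟨hg, h2, ?_⟩
      have h3 : A† ⟨w, h2⟩ = -g := LinearPMap.adjoint_apply_eq hA ⟨w, h2⟩ hkey2
      rw [h3]; simp
    · rintro ⟨hg, h2, heq⟩
      refine ⟨hg, hg, ?_⟩
      intro f hf hfB
      have h3 : (C.conjOp A)† ⟨f, hfB⟩ = A ⟨f, hf⟩ := (hAB.2 rfl).symm
      rw [h3]
      have h4 : A† ⟨(C.conjOp A)† ⟨g, hg⟩, h2⟩ = -g :=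
        eq_neg_of_add_eq_zero_right heq
      have hfa := LinearPMap.adjoint_isFormalAdjoint hA
        (⟨(C.conjOp A)† ⟨g, hg⟩, h2⟩ : (A†).domain) ⟨f, hf⟩
      have h5 : ⟪(A ⟨f, hf⟩ : H), ((C.conjOp A)† ⟨g, hg⟩ : H)⟫_ℂ = -⟪f, g⟫_ℂ := by
        rw [← inner_conj_symm ((A ⟨f, hf⟩ : H)) ((C.conjOp A)† ⟨g, hg⟩ : H), ← hfa, h4]
        simp [inner_neg_left, inner_conj_symm]
      rw [h5]
      simp
  refine ⟨hmain, hmain.trans ?_⟩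
  unfold kerIplusAstarBstar kerIplusAstarCAstarC
  rw [hEq]
end

section
/- Let A be a densely defined closed C-symmetric operator and à a closed operator with A ⊆ à ⊆ B* where B = CAC. Writing D(Ã) = D(A) ⊕ L_{Ã} (orthogonal in H_{B*}) and D(Ã*) = D(B) ⊕ L_{Ã*} (orthogonal in H_{A*}), the subspace L_{Ã*} equals the orthogonal complement of B* L_{Ã} in M_{A*}. -/
open scoped InnerProductSpace
open LinearPMap

variable {H : Type*} [NormedAddCommGroup H] [InnerProductSpace ℂ H]

variable [CompleteSpace H]

section AuxLemmas

open LinearPMap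

lemma Conjugation.norm_conj' (C : Conjugation H) (x : H) : ‖C x‖ = ‖x‖ := by
  have h := C.inner_conj x x
  have h2 : ‖C.toFun x‖ * ‖C.toFun x‖ = ‖x‖ * ‖x‖ := by
    rw [← @inner_self_eq_norm_mul_norm ℂ, ← @inner_self_eq_norm_mul_norm ℂ, h]
  nlinarith [norm_nonneg (C.toFun x), norm_nonneg x]

lemma Conjugation.map_sub'_s8 (C : Conjugation H) (x y : H) : C (x - y) = C x - C y := by
  have h1 : C.toFun (x + (-1 : ℂ) • y) = C.toFun x + (starRingEnd ℂ (-1 : ℂ)) • C.toFun y :=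
    by rw [C.map_add', C.map_smulc]
  simpa [sub_eq_add_neg] using h1

lemma Conjugation.dense_image' (C : Conjugation H) {s : Set H} (hs : Dense s) :
    Dense (C.toFun '' s) := by
  have hiso : Isometry C.toFun := Isometry.of_dist_eq fun a b => by
    rw [dist_eq_norm, dist_eq_norm, ← C.map_sub'_s8, C.norm_conj']
  intro x
  have h1 : C x ∈ closure s := hs _
  have h2 : x ∈ C.toFun '' closure s := ⟨C x, h1, C.invol x⟩
  exact (image_closure_subset_closure_image hiso.continuous) h2

lemma adjoint_mem_and_eq {T : H →ₗ.[ℂ] H} (hT : Dense (T.domain : Set H)) {y z : H}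
    (h : ∀ x : T.domain, ⟪z, (x : H)⟫_ℂ = ⟪y, T x⟫_ℂ) :
    ∃ hy : y ∈ (T†).domain, T† ⟨y, hy⟩ = z := by
  have hy := LinearPMap.mem_adjoint_domain_of_exists y ⟨z, h⟩
  exact ⟨hy, LinearPMap.adjoint_apply_eq hT ⟨y, hy⟩ h⟩

end AuxLemmas

theorem stmt_8 (C : Conjugation H) (A Atil : H →ₗ.[ℂ] H) (hA : Dense (A.domain : Set H))
    (hclosedA : A.IsClosed) (hsym : C.IsCSymmetric A) (hclosed : Atil.IsClosed)
    (h1 : A ≤ Atil) (h2 : Atil ≤ (C.conjOp A)†) :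
    graphOrthComplIn (A†) (((Atil†).domain : Set H)) ((C.conjOp A).domain : Set H)
      = graphOrthComplIn (A†)
          (graphOrthComplIn (A†) (((A†).domain : Set H)) ((C.conjOp A).domain : Set H))
          {x : H | ∃ g ∈ graphOrthComplIn ((C.conjOp A)†) ((Atil.domain : Set H))
              ((A.domain : Set H)),
            ∃ hg : g ∈ ((C.conjOp A)†).domain, (C.conjOp A)† ⟨g, hg⟩ = x} := by
  have hBdense : Dense (((C.conjOp A).domain : Submodule ℂ H) : Set H) := by
    have he : (((C.conjOp A).domain : Submodule ℂ H) : Set H) = C.toFun '' (A.domain : Set H) := rfl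
    rw [he]; exact C.dense_image' hA
  have hAtilDense : Dense ((Atil.domain : Submodule ℂ H) : Set H) := hA.mono h1.1
  -- (F2) : A ≤ B† where B = C.conjOp A
  have hF2 : ∀ x : A.domain, ∃ hx : (x : H) ∈ ((C.conjOp A)†).domain,
      (C.conjOp A)† ⟨x, hx⟩ = A x := by
    intro x
    refine adjoint_mem_and_eq hBdense ?_
    intro u
    have hu : (u : H) ∈ (A†).domain := hsym.1 u.2
    have huv : (C.conjOp A) u = A† ⟨u, hu⟩ := hsym.2 rfl
    rw [huv]
    have h3 := LinearPMap.adjoint_isFormalAdjoint hA ⟨(u : H), hu⟩ x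
    calc ⟪A x, (u : H)⟫_ℂ = (starRingEnd ℂ) ⟪(u : H), A x⟫_ℂ := (inner_conj_symm _ _).symm
      _ = (starRingEnd ℂ) ⟪A† ⟨(u : H), hu⟩, (x : H)⟫_ℂ := by rw [h3]
      _ = ⟪(x : H), A† ⟨(u : H), hu⟩⟫_ℂ := inner_conj_symm _ _
  -- (F4) : Atil† ≤ A†
  have hF4 : ∀ g : (Atil†).domain, ∃ hg : (g : H) ∈ (A†).domain,
      A† ⟨(g : H), hg⟩ = Atil† g := by
    intro g
    refine adjoint_mem_and_eq hA ?_
    intro x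
    have hx : (x : H) ∈ Atil.domain := h1.1 x.2
    have hval : A x = Atil ⟨(x : H), hx⟩ := h1.2 rfl
    have h3 := LinearPMap.adjoint_isFormalAdjoint hAtilDense g ⟨(x : H), hx⟩
    rw [← hval] at h3
    exact h3
  -- (F5) : for h ∈ L, B† h ∈ D(A†) and A† (B† h) = -h
  have hF5 : ∀ (hh : H), hh ∈ graphOrthComplIn ((C.conjOp A)†) ((Atil.domain : Set H))
      ((A.domain : Set H)) → ∀ hhB : hh ∈ ((C.conjOp A)†).domain,
      ∃ hx : (C.conjOp A)† ⟨hh, hhB⟩ ∈ (A†).domain,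
        A† ⟨(C.conjOp A)† ⟨hh, hhB⟩, hx⟩ = -hh := by
    intro hh hmem hhB
    obtain ⟨hhAtil, hhB', horth⟩ := hmem
    refine adjoint_mem_and_eq hA ?_
    intro x
    obtain ⟨hxB, hxBval⟩ := hF2 x
    have h4 := horth (x : H) x.2 hxB
    rw [hxBval] at h4
    have h5 : ⟪A x, (C.conjOp A)† ⟨hh, hhB⟩⟫_ℂ = -⟪(x : H), hh⟫_ℂ := by
      have : (⟨hh, hhB'⟩ : ((C.conjOp A)†).domain) = ⟨hh, hhB⟩ := rfl
      rw [this] at h4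
      linear_combination h4
    calc ⟪-hh, (x : H)⟫_ℂ = (starRingEnd ℂ) ⟪(x : H), -hh⟫_ℂ := (inner_conj_symm _ _).symm
      _ = (starRingEnd ℂ) (-⟪(x : H), hh⟫_ℂ) := by rw [inner_neg_right]
      _ = (starRingEnd ℂ) ⟪A x, (C.conjOp A)† ⟨hh, hhB⟩⟫_ℂ := by rw [h5]
      _ = ⟪(C.conjOp A)† ⟨hh, hhB⟩, A x⟫_ℂ := inner_conj_symm _ _
  -- (F6) : decomposition of D(Atil)
  have hdec : ∀ f : Atil.domain, ∃ (f0 : A.domain) (hh : H)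
      (_ : hh ∈ graphOrthComplIn ((C.conjOp A)†) ((Atil.domain : Set H)) ((A.domain : Set H)))
      (hhB : hh ∈ ((C.conjOp A)†).domain),
      (f : H) = (f0 : H) + hh ∧ Atil f = A f0 + (C.conjOp A)† ⟨hh, hhB⟩ := by
    intro f
    set e : WithLp 2 (H × H) ≃L[ℂ] H × H := WithLp.prodContinuousLinearEquiv 2 ℂ H H with he
    set G : Submodule ℂ (WithLp 2 (H × H)) :=
      A.graph.comap (e.toLinearEquiv : WithLp 2 (H × H) →ₗ[ℂ] H × H) with hG
    have hGc : IsClosed (G : Set (WithLp 2 (H × H))) := by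
      have h5 : (G : Set (WithLp 2 (H × H))) = ⇑e ⁻¹' (A.graph : Set (H × H)) := rfl
      rw [h5]; exact hclosedA.preimage e.continuous
    haveI : CompleteSpace G := hGc.completeSpace_coe
    set v : WithLp 2 (H × H) := (WithLp.equiv 2 (H × H)).symm ((f : H), Atil f) with hv
    obtain ⟨p, hpG, q, hqG, hpq⟩ := G.exists_add_mem_mem_orthogonal v
    have hpg : e p ∈ A.graph := Submodule.mem_comap.1 hpG
    obtain ⟨f0, hf01, hf02⟩ := A.mem_graph_iff.1 hpg
    -- basic membership facts
    have hfB : (f : H) ∈ ((C.conjOp A)†).domain := h2.1 f.2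
    have hfBval : (C.conjOp A)† ⟨(f : H), hfB⟩ = Atil f := (h2.2 (y := ⟨(f : H), hfB⟩) rfl).symm
    obtain ⟨hf0B, hf0Bval⟩ := hF2 f0
    have hsub : (f : H) - (f0 : H) ∈ ((C.conjOp A)†).domain :=
      Submodule.sub_mem _ hfB hf0B
    have hsubval : (C.conjOp A)† ⟨(f : H) - (f0 : H), hsub⟩ = Atil f - A f0 := by
      have h6 : (⟨(f : H) - (f0 : H), hsub⟩ : (((C.conjOp A)†).domain))
          = ⟨(f : H), hfB⟩ - ⟨(f0 : H), hf0B⟩ := rfl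
      rw [h6, LinearPMap.map_sub, hfBval, hf0Bval]
    -- identify q
    have hq : q = v - p := by rw [hpq]; abel
    have hpfst : p.fst = (f0 : H) := by rw [hf01]; rfl
    have hpsnd : p.snd = A f0 := by rw [hf02]; rfl
    have hqfst : q.fst = (f : H) - (f0 : H) := by
      rw [hq, WithLp.sub_fst, hpfst]; rfl
    have hqsnd : q.snd = Atil f - A f0 := by
      rw [hq, WithLp.sub_snd, hpsnd]; rfl
    -- orthogonality of h := f - f0 to the graph of A
    have horthog : ∀ fa ∈ (A.domain : Set H), ∀ hfa : fa ∈ ((C.conjOp A)†).domain,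
        ⟪fa, (f : H) - (f0 : H)⟫_ℂ + ⟪(C.conjOp A)† ⟨fa, hfa⟩,
          (C.conjOp A)† ⟨(f : H) - (f0 : H), hsub⟩⟫_ℂ = 0 := by
      intro fa hfamem hfa
      set u : WithLp 2 (H × H) := (WithLp.equiv 2 (H × H)).symm (fa, A ⟨fa, hfamem⟩) with hu
      have huG : u ∈ G := by
        refine Submodule.mem_comap.2 ?_
        have h7 : (e.toLinearEquiv : WithLp 2 (H × H) →ₗ[ℂ] H × H) u
            = (fa, A ⟨fa, hfamem⟩) := rfl
        rw [h7]
        exact A.mem_graph ⟨fa, hfamem⟩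
      have hinner := (Submodule.mem_orthogonal G q).1 hqG u huG
      rw [WithLp.prod_inner_apply] at hinner
      change ⟪u.fst, q.fst⟫_ℂ + ⟪u.snd, q.snd⟫_ℂ = 0 at hinner
      have hufst : u.fst = fa := rfl
      have husnd : u.snd = A ⟨fa, hfamem⟩ := rfl
      rw [hufst, husnd, hqfst, hqsnd] at hinner
      obtain ⟨hfa', hfa'val⟩ := hF2 ⟨fa, hfamem⟩
      have h8 : (C.conjOp A)† ⟨fa, hfa⟩ = A ⟨fa, hfamem⟩ := by
        have : (⟨fa, hfa⟩ : (((C.conjOp A)†).domain)) = ⟨fa, hfa'⟩ := rfl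
        rw [this, hfa'val]
      rw [h8, hsubval]
      exact hinner
    refine ⟨f0, (f : H) - (f0 : H), ⟨?_, hsub, horthog⟩, hsub, by abel, ?_⟩
    · exact Submodule.sub_mem _ f.2 (h1.1 f0.2)
    · rw [hsubval]; abel
  ext g
  constructor
  · rintro ⟨hgW, hgA, hcond⟩
    refine ⟨⟨hgA, hgA, hcond⟩, hgA, ?_⟩
    intro x hxS hx
    obtain ⟨hh, hL, hhB, rfl⟩ := hxS
    obtain ⟨hx', hxval⟩ := hF5 hh hL hhB
    have hxv : A† ⟨(C.conjOp A)† ⟨hh, hhB⟩, hx⟩ = -hh := by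
      have h20 : (⟨(C.conjOp A)† ⟨hh, hhB⟩, hx⟩ : (A†).domain) = ⟨_, hx'⟩ := rfl
      rw [h20, hxval]
    rw [hxv]
    have hhAtil : hh ∈ Atil.domain := hL.1
    have hform := LinearPMap.adjoint_isFormalAdjoint hAtilDense ⟨g, hgW⟩ ⟨hh, hhAtil⟩
    obtain ⟨hgA', hgA'val⟩ := hF4 ⟨g, hgW⟩
    have hAg : A† ⟨g, hgA⟩ = Atil† ⟨g, hgW⟩ := by
      have h21 : (⟨g, hgA⟩ : (A†).domain) = ⟨g, hgA'⟩ := rfl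
      rw [h21, hgA'val]
    have hAtilhh : Atil ⟨hh, hhAtil⟩ = (C.conjOp A)† ⟨hh, hhB⟩ :=
      h2.2 (y := ⟨hh, hhB⟩) rfl
    rw [hAg]
    rw [hAtilhh] at hform
    have hform' : ⟪Atil† ⟨g, hgW⟩, hh⟫_ℂ = ⟪g, (C.conjOp A)† ⟨hh, hhB⟩⟫_ℂ := hform
    have h22 := congrArg (starRingEnd ℂ) hform'
    rw [inner_conj_symm, inner_conj_symm] at h22
    rw [inner_neg_left, h22]
    ring
  · rintro ⟨⟨hgAs, hgA, hcond⟩, hgA2, hcondS⟩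
    refine ⟨?_, hgA, hcond⟩
    refine LinearPMap.mem_adjoint_domain_of_exists g ⟨A† ⟨g, hgA2⟩, ?_⟩
    intro x
    obtain ⟨f0, hh, hL, hhB, hsum, hval⟩ := hdec x
    obtain ⟨hxA, hxAval⟩ := hF5 hh hL hhB
    have h9 := hcondS ((C.conjOp A)† ⟨hh, hhB⟩) ⟨hh, hL, hhB, rfl⟩ hxA
    rw [hxAval] at h9
    rw [inner_neg_left] at h9
    have h11 : ⟪g, (C.conjOp A)† ⟨hh, hhB⟩⟫_ℂ = ⟪A† ⟨g, hgA2⟩, hh⟫_ℂ := by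
      have h10 : ⟪(C.conjOp A)† ⟨hh, hhB⟩, g⟫_ℂ = ⟪hh, A† ⟨g, hgA2⟩⟫_ℂ := by
        linear_combination h9
      have h23 := congrArg (starRingEnd ℂ) h10
      rwa [inner_conj_symm, inner_conj_symm] at h23
    have h12 : ⟪A† ⟨g, hgA2⟩, (f0 : H)⟫_ℂ = ⟪g, A f0⟫_ℂ :=
      LinearPMap.adjoint_isFormalAdjoint hA ⟨g, hgA2⟩ f0
    rw [hval, hsum, inner_add_right, inner_add_right]
    linear_combination h12 - h11
end

section
/- If S is an anti-unitary anti-involution (conjugate-linear, norm-preserving, S² = −I) on a Hilbert space H, then there exists a closed subspace H₀ of H such that H = H₀ ⊕ S H₀ is an orthogonal decomposition. -/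
open scoped InnerProductSpace
open LinearPMap

variable {H : Type*} [NormedAddCommGroup H] [InnerProductSpace ℂ H]

variable [CompleteSpace H]

theorem stmt_12 (S : H → H)
    (hadd : ∀ x y, S (x + y) = S x + S y)
    (hsmul : ∀ (c : ℂ) (x : H), S (c • x) = (starRingEnd ℂ) c • S x)
    (hbij : Function.Bijective S)
    (hinner : ∀ x y, ⟪S x, S y⟫_ℂ = ⟪y, x⟫_ℂ)
    (hinv : ∀ x, S (S x) = -x) :
    ∃ H₀ : Submodule ℂ H, IsClosed (H₀ : Set H)
      ∧ (∀ x ∈ H₀, ∀ y ∈ H₀, ⟪x, S y⟫_ℂ = 0)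
      ∧ ∀ z : H, ∃ x ∈ H₀, ∃ y ∈ H₀, z = x + S y := by
  classical
  -- basic facts about S
  have hS0 : S 0 = 0 := by
    have := hsmul 0 0; simpa using this
  have hSneg : ∀ x, S (-x) = -S x := by
    intro x
    have := hsmul (-1) x
    simpa using this
  have hSSinv : ∀ x, S (-S x) = x := by
    intro x; rw [hSneg, hinv, neg_neg]
  have hnorm : ∀ x, ‖S x‖ = ‖x‖ := by
    intro x
    have h1 : ⟪S x, S x⟫_ℂ = ⟪x, x⟫_ℂ := hinner x x
    rw [norm_eq_sqrt_re_inner (𝕜 := ℂ) (S x), norm_eq_sqrt_re_inner (𝕜 := ℂ) x, h1]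
  have hisom : Isometry S := by
    apply Isometry.of_dist_eq
    intro x y
    have : S x - S y = S (x - y) := by
      rw [sub_eq_add_neg, sub_eq_add_neg, hadd, hSneg]
    rw [dist_eq_norm, dist_eq_norm, this, hnorm]
  have hcont : Continuous S := hisom.continuous
  have hxSz : ∀ x z : H, ⟪x, S z⟫_ℂ = -⟪z, S x⟫_ℂ := by
    intro x z
    have h := hinner (-S x) z
    rw [hSSinv] at h
    rw [h, inner_neg_right]
  have hzSz : ∀ z : H, ⟪z, S z⟫_ℂ = 0 := by
    intro z
    have := hxSz z z
    linear_combination this / 2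
  -- the family for Zorn's lemma
  set s : Set (Submodule ℂ H) :=
    {M | ∀ x ∈ M, ∀ y ∈ M, ⟪x, S y⟫_ℂ = 0} with hs_def
  -- the property passes to topological closures
  have hclos : ∀ M ∈ s, M.topologicalClosure ∈ s := by
    intro M hM x hx y hy
    rw [show M.topologicalClosure = M.topologicalClosure from rfl] at hx hy
    replace hx : x ∈ closure (M : Set H) := by
      rw [← Submodule.topologicalClosure_coe]; exact hx
    replace hy : y ∈ closure (M : Set H) := by
      rw [← Submodule.topologicalClosure_coe]; exact hy
    have step1 : ∀ y' ∈ (M : Set H), ∀ x' ∈ closure (M : Set H), ⟪x', S y'⟫_ℂ = 0 := by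
      intro y' hy' x' hx'
      have hcl : IsClosed {x'' : H | ⟪x'', S y'⟫_ℂ = 0} :=
        isClosed_eq (continuous_id.inner continuous_const) continuous_const
      exact closure_minimal (fun x'' hx'' => hM x'' hx'' y' hy') hcl hx'
    have hcl2 : IsClosed {y' : H | ⟪x, S y'⟫_ℂ = 0} :=
      isClosed_eq (continuous_const.inner hcont) continuous_const
    exact closure_minimal (fun y' hy' => step1 y' hy' x hx) hcl2 hy
  -- Zorn's lemma
  obtain ⟨M, hMmax⟩ : ∃ M, Maximal (· ∈ s) M := by
    apply zorn_le₀
    intro c hcs hchain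
    rcases c.eq_empty_or_nonempty with rfl | hcne
    · refine ⟨⊥, ?_, by simp⟩
      intro x hx y hy
      rw [Submodule.mem_bot] at hx
      simp [hx]
    · refine ⟨sSup c, ?_, fun z hz => le_sSup hz⟩
      intro x hx y hy
      rw [Submodule.mem_sSup_of_directed hcne hchain.directedOn] at hx hy
      obtain ⟨M₁, hM₁, hx⟩ := hx
      obtain ⟨M₂, hM₂, hy⟩ := hy
      rcases hchain.total hM₁ hM₂ with h | h
      · exact hcs hM₂ x (h hx) y hy
      · exact hcs hM₁ x hx y (h hy)
  obtain ⟨hMs, hMmax⟩ := hMmax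
  -- M is closed
  have hMeq : M.topologicalClosure = M :=
    le_antisymm (hMmax (hclos M hMs) (Submodule.le_topologicalClosure M))
      (Submodule.le_topologicalClosure M)
  have hMclosed : IsClosed (M : Set H) := by
    rw [← hMeq]; exact Submodule.isClosed_topologicalClosure M
  -- the subspace K = S(M)
  set K : Submodule ℂ H :=
    { carrier := {x | -S x ∈ M}
      add_mem' := by
        intro a b ha hb
        simp only [Set.mem_setOf_eq] at *
        rw [hadd, neg_add]
        exact M.add_mem ha hb
      zero_mem' := by simp [hS0]
      smul_mem' := by
        intro c a ha
        simp only [Set.mem_setOf_eq] at *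
        rw [hsmul, ← smul_neg]
        exact M.smul_mem _ ha } with hK_def
  have hmemK : ∀ x, x ∈ K ↔ -S x ∈ M := fun x => Iff.rfl
  have hSK : ∀ y ∈ M, S y ∈ K := by
    intro y hy
    rw [hmemK, hinv, neg_neg]
    exact hy
  have hKclosed : IsClosed (K : Set H) := by
    have : (K : Set H) = (fun x => -S x) ⁻¹' (M : Set H) := rfl
    rw [this]
    exact hMclosed.preimage (hcont.neg)
  -- K ≤ Mᗮ
  have hKM : K ≤ Mᗮ := by
    intro x hx
    rw [Submodule.mem_orthogonal]
    intro u hu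
    have : S (-S x) = x := hSSinv x
    rw [← this]
    exact hMs u hu (-S x) (hx : -S x ∈ M)
  haveI : CompleteSpace K := hKclosed.completeSpace_coe
  haveI : CompleteSpace M := hMclosed.completeSpace_coe
  -- Mᗮ ⊓ Kᗮ = ⊥ by maximality
  have hinf : Mᗮ ⊓ Kᗮ = ⊥ := by
    rw [eq_bot_iff]
    intro z hz
    obtain ⟨hzM, hzK⟩ := Submodule.mem_inf.mp hz
    rw [Submodule.mem_bot]
    by_contra hzne
    -- build a bigger element of s
    have hM' : (M ⊔ (ℂ ∙ z)) ∈ s := by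
      intro x' hx' y' hy'
      rw [Submodule.mem_sup] at hx' hy'
      obtain ⟨x, hx, x₂, hx₂, rfl⟩ := hx'
      obtain ⟨y, hy, y₂, hy₂, rfl⟩ := hy'
      rw [Submodule.mem_span_singleton] at hx₂ hy₂
      obtain ⟨a, rfl⟩ := hx₂
      obtain ⟨b, rfl⟩ := hy₂
      have hzSx : ⟪z, S x⟫_ℂ = 0 := by
        rw [Submodule.mem_orthogonal'] at hzK
        exact hzK (S x) (hSK x hx)
      have hzSy : ⟪z, S y⟫_ℂ = 0 := by
        rw [Submodule.mem_orthogonal'] at hzK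
        exact hzK (S y) (hSK y hy)
      have hxSz' : ⟪x, S z⟫_ℂ = 0 := by rw [hxSz]; rw [hzSx]; ring
      rw [hadd, hsmul, inner_add_left, inner_add_right, inner_add_right,
        inner_smul_left, inner_smul_left, inner_smul_right, inner_smul_right,
        hMs x hx y hy, hzSy, hxSz', hzSz]
      ring
    have hle : M ≤ M ⊔ (ℂ ∙ z) := le_sup_left
    have hzmem : z ∈ M ⊔ (ℂ ∙ z) :=
      (le_sup_right : (ℂ ∙ z) ≤ M ⊔ (ℂ ∙ z)) (Submodule.mem_span_singleton_self z)
    have : z ∈ M := hMmax hM' hle hzmem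
    rw [Submodule.mem_orthogonal] at hzM
    exact hzne (inner_self_eq_zero.mp (hzM z this))
  -- Mᗮ = K
  have hMK : Mᗮ = K := by
    have h1 : K ⊔ Kᗮ = ⊤ := Submodule.sup_orthogonal_of_hasOrthogonalProjection
    have h2 : (K ⊔ Kᗮ) ⊓ Mᗮ = K ⊔ (Kᗮ ⊓ Mᗮ) := sup_inf_assoc_of_le _ hKM
    rw [h1, top_inf_eq, inf_comm Kᗮ Mᗮ, hinf, sup_bot_eq] at h2
    exact h2
  have htop : M ⊔ K = ⊤ := by
    rw [← hMK]
    exact Submodule.sup_orthogonal_of_hasOrthogonalProjection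
  refine ⟨M, hMclosed, hMs, ?_⟩
  intro w
  have hw : w ∈ M ⊔ K := by rw [htop]; exact Submodule.mem_top
  rw [Submodule.mem_sup] at hw
  obtain ⟨x, hx, k, hk, rfl⟩ := hw
  exact ⟨x, hx, -S k, hk, by rw [hSSinv]⟩
end
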